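/- Let u, ũ be the divisible sandpile odometer functions on a graph G with rescaled Laplacian Δₙ, started respectively from a bounded finitely supported density σ (with 0 ≤ σ ≤ M) and from its k-step smoothing S_k σ, where S_1 f = f + (δ^β/2) Δₙ f and S_k = (S_1)^k. Then |u(x) − ũ(x)| ≤ (1/2) k M δ^β for all vertices x. -/

import Mathlib

/-- Smoothing error for sandpile odometers: if `u` and `ũ` are the divisible sandpile
odometers (least action principle) for initial densities `σ` and `S_k σ` respectively,
where `S` is the iterated smoothing `S_{j+1} f = S_j f + (δ^β/2) Δₙ (S_j f)` and
`0 ≤ σ ≤ M`, then `|u − ũ| ≤ (1/2) k M δ^β` everywhere. -/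
theorem sandpile_odometer_smoothing_error {V : Type*} (nbr : V → Finset V)
    (hreg : ∀ x, (nbr x).card = 4)
    (δ β M : ℝ) (hδ : 0 < δ) (hM : 0 ≤ M)
    (L : (V → ℝ) → V → ℝ)
    (hL : ∀ f x, L f x = δ ^ (-β) * ((1 / 4) * ∑ y ∈ nbr x, f y - f x))
    (σ : V → ℝ) (hσfin : (Function.support σ).Finite)
    (hσ0 : ∀ x, 0 ≤ σ x) (hσM : ∀ x, σ x ≤ M)
    (S : ℕ → V → ℝ) (hS0 : S 0 = σ)
    (hSsucc : ∀ j x, S (j + 1) x = S j x + (δ ^ β / 2) * L (S j) x)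
    (k : ℕ) (u utilde : V → ℝ)
    (hu : (∀ x, 0 ≤ u x) ∧ (∀ x, σ x + L u x ≤ 1) ∧
      ∀ v : V → ℝ, (∀ x, 0 ≤ v x) → (∀ x, σ x + L v x ≤ 1) → ∀ x, u x ≤ v x)
    (hut : (∀ x, 0 ≤ utilde x) ∧ (∀ x, S k x + L utilde x ≤ 1) ∧
      ∀ v : V → ℝ, (∀ x, 0 ≤ v x) → (∀ x, S k x + L v x ≤ 1) → ∀ x, utilde x ≤ v x) :
    ∀ x, |u x - utilde x| ≤ (1 / 2) * k * M * δ ^ β := by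
  obtain ⟨hu0, hu1, humin⟩ := hu
  obtain ⟨ht0, ht1, htmin⟩ := hut
  have hδβ : (0:ℝ) < δ ^ β := Real.rpow_pos_of_pos hδ β
  have hneg : δ ^ (-β) = (δ ^ β)⁻¹ := Real.rpow_neg hδ.le β
  have hcancel : δ ^ β * δ ^ (-β) = 1 := by
    rw [hneg]; field_simp
  -- the smoothed densities stay in [0, M]
  have hSb : ∀ j, (∀ x, 0 ≤ S j x) ∧ (∀ x, S j x ≤ M) := by
    intro j
    induction j with
    | zero => exact ⟨by simpa [hS0] using hσ0, by simpa [hS0] using hσM⟩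
    | succ j ih =>
      obtain ⟨ih0, ihM⟩ := ih
      have key : ∀ x, S (j + 1) x
          = (1/2) * S j x + (1/8) * ∑ y ∈ nbr x, S j y := by
        intro x
        rw [hSsucc, hL]
        have : δ ^ β / 2 * (δ ^ (-β) * (1 / 4 * ∑ y ∈ nbr x, S j y - S j x))
            = (δ ^ β * δ ^ (-β)) * (1/2) * (1 / 4 * ∑ y ∈ nbr x, S j y - S j x) := by
          ring
        rw [this, hcancel]; ring
      constructor <;> intro x <;> rw [key x]
      · have h1 : (0:ℝ) ≤ ∑ y ∈ nbr x, S j y :=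
          Finset.sum_nonneg fun y _ => ih0 y
        have := ih0 x
        linarith
      · have h1 : ∑ y ∈ nbr x, S j y ≤ (nbr x).card • M :=
          Finset.sum_le_card_nsmul _ _ _ fun y _ => ihM y
        rw [hreg x] at h1
        have h1' : ∑ y ∈ nbr x, S j y ≤ 4 * M := by
          simpa [nsmul_eq_mul] using h1
        have := ihM x
        linarith
  -- the accumulated odometer w
  set w : V → ℝ := fun x => (δ ^ β / 2) * ∑ j ∈ Finset.range k, S j x with hw
  have hw0 : ∀ x, 0 ≤ w x := by
    intro x
    exact mul_nonneg (by positivity) (Finset.sum_nonneg fun j _ => (hSb j).1 x)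
  have hwM : ∀ x, w x ≤ (1 / 2) * k * M * δ ^ β := by
    intro x
    have h1 : ∑ j ∈ Finset.range k, S j x ≤ (Finset.range k).card • M :=
      Finset.sum_le_card_nsmul _ _ _ fun j _ => (hSb j).2 x
    rw [Finset.card_range, nsmul_eq_mul] at h1
    calc w x ≤ (δ ^ β / 2) * ((k : ℝ) * M) := by
          apply mul_le_mul_of_nonneg_left h1 (by positivity)
      _ = (1 / 2) * k * M * δ ^ β := by ring
  -- L w = S k - σ  (telescoping)
  have hLw : ∀ x, L w x = S k x - σ x := by
    intro x
    have step : ∀ j, (δ ^ β / 2) * L (S j) x = S (j+1) x - S j x := by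
      intro j
      rw [hSsucc]; ring
    have hswap : (1/4 : ℝ) * ∑ y ∈ nbr x, w y
        = (δ ^ β / 2) * ∑ j ∈ Finset.range k, (1/4) * ∑ y ∈ nbr x, S j y := by
      simp only [hw]
      rw [Finset.mul_sum, Finset.mul_sum]
      rw [show (∑ y ∈ nbr x, 1 / 4 * (δ ^ β / 2 * ∑ j ∈ Finset.range k, S j y))
          = ∑ y ∈ nbr x, ∑ j ∈ Finset.range k, 1/4 * (δ^β/2) * S j y from
        Finset.sum_congr rfl fun y _ => by
          rw [Finset.mul_sum, Finset.mul_sum]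
          exact Finset.sum_congr rfl fun j _ => by ring]
      rw [Finset.sum_comm]
      refine Finset.sum_congr rfl fun j _ => ?_
      rw [Finset.mul_sum, Finset.mul_sum]
      exact Finset.sum_congr rfl fun y _ => by ring
    rw [hL, hswap]
    have : δ ^ (-β) * (δ ^ β / 2 * ∑ j ∈ Finset.range k, 1 / 4 * ∑ y ∈ nbr x, S j y
          - δ ^ β / 2 * ∑ j ∈ Finset.range k, S j x)
        = ∑ j ∈ Finset.range k, (δ ^ β / 2) *
            (δ ^ (-β) * (1 / 4 * ∑ y ∈ nbr x, S j y - S j x)) := by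
      rw [Finset.mul_sum, Finset.mul_sum, ← Finset.sum_sub_distrib, Finset.mul_sum]
      exact Finset.sum_congr rfl fun j _ => by ring
    rw [this]
    have : ∑ j ∈ Finset.range k, (δ ^ β / 2) *
            (δ ^ (-β) * (1 / 4 * ∑ y ∈ nbr x, S j y - S j x))
        = ∑ j ∈ Finset.range k, (S (j+1) x - S j x) := by
      congr 1; ext j
      rw [← step j, hL]
    rw [this, Finset.sum_range_sub (fun j => S j x), hS0]
  -- L kills constants
  set c : ℝ := (1 / 2) * k * M * δ ^ β with hc
  have hc0 : 0 ≤ c := by positivity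
  -- direction 1: u ≤ utilde + w
  have h1 : ∀ x, u x ≤ utilde x + w x := by
    apply humin
    · intro x; exact add_nonneg (ht0 x) (hw0 x)
    · intro x
      have hLadd : L (fun y => utilde y + w y) x = L utilde x + L w x := by
        rw [hL, hL, hL, Finset.sum_add_distrib]; ring
      rw [hLadd, hLw]
      have := ht1 x
      linarith
  -- direction 2: utilde ≤ u - w + c
  have h2 : ∀ x, utilde x ≤ u x - w x + c := by
    apply htmin
    · intro x
      have := hwM x
      have := hu0 x
      simp only [← hc] at *
      linarith
    · intro x
      have hLv : L (fun y => u y - w y + c) x = L u x - L w x := by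
        rw [hL, hL, hL]
        have hsum : ∑ y ∈ nbr x, (u y - w y + c)
            = ∑ y ∈ nbr x, u y - ∑ y ∈ nbr x, w y + 4 * c := by
          rw [Finset.sum_add_distrib, Finset.sum_sub_distrib, Finset.sum_const, hreg x]
          push_cast; ring
        rw [hsum]; ring
      rw [hLv, hLw]
      have := hu1 x
      linarith
  intro x
  rw [abs_sub_le_iff]
  constructor
  · have := h1 x; have := hwM x; linarith
  · have := h2 x; have := hw0 x; linarith
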